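/- Let ω be a modulus with ω(r) > 0 for all r > 0, and suppose liminf_{η→0⁺} 2ω(η)/ω(2η) > 1. Then there exists K > 0 such that for all sufficiently small ε > 0: ∫_0^{ε·θ_ω(ε)} max(ω(r) − 2r/ε, 0) dr ≥ K^{-1}·ε·θ_ω(ε)². -/

import Mathlib

open MeasureTheory Set Real Filter Topology ProbabilityTheory

noncomputable section

def IsModulus (om : ℝ → ℝ) : Prop :=
  ContinuousOn om (Set.Ici 0) ∧ MonotoneOn om (Set.Ici 0) ∧
  (∀ a ∈ Set.Ici (0:ℝ), ∀ b ∈ Set.Ici (0:ℝ), om (a + b) ≤ om a + om b) ∧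
  om 0 = 0 ∧ (∀ r ∈ Set.Ici (0:ℝ), 0 ≤ om r)

lemma mod_nsmul (om : ℝ → ℝ) (hom : IsModulus om) (a : ℝ) (ha : 0 ≤ a) :
    ∀ n : ℕ, om (n * a) ≤ n * om a := by
  obtain ⟨-, -, hsub, h0, -⟩ := hom
  intro n
  induction n with
  | zero => simp [h0]
  | succ n ih =>
    have h1 : om ((n : ℝ) * a + a) ≤ om ((n:ℝ) * a) + om a :=
      hsub _ (Set.mem_Ici.mpr (by positivity)) _ (Set.mem_Ici.mpr ha)
    push_cast
    calc om ((n + 1 : ℝ) * a) = om ((n:ℝ) * a + a) := by ring_nf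
      _ ≤ om ((n:ℝ)*a) + om a := h1
      _ ≤ n * om a + om a := by linarith
      _ = ((n:ℝ) + 1) * om a := by ring

lemma mod_linear (om : ℝ → ℝ) (hom : IsModulus om) (r : ℝ) (hr : 0 ≤ r) :
    om r ≤ (r + 1) * om 1 := by
  have hmono := hom.2.1
  have h1 : om r ≤ om (Nat.ceil r : ℝ) :=
    hmono (Set.mem_Ici.mpr hr) (Set.mem_Ici.mpr (by positivity)) (Nat.le_ceil r)
  have h2 : om ((Nat.ceil r : ℝ) * 1) ≤ (Nat.ceil r : ℝ) * om 1 :=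
    mod_nsmul om hom 1 zero_le_one _
  rw [mul_one] at h2
  have h3 : (Nat.ceil r : ℝ) ≤ r + 1 := le_of_lt (Nat.ceil_lt_add_one hr)
  have hom1 : 0 ≤ om 1 := hom.2.2.2.2 1 (by norm_num)
  have h4 := mul_le_mul_of_nonneg_right h3 hom1
  linarith

lemma mod_doubling_iter (om : ℝ → ℝ) (c η₀ : ℝ) (hc : 0 < c)
    (hd : ∀ η ∈ Set.Ioc (0:ℝ) η₀, c * om (2 * η) ≤ 2 * om η) :
    ∀ n : ℕ, ∀ t : ℝ, 0 < t → t ≤ η₀ → (c/2)^n * om t ≤ om (t / 2^n) := by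
  intro n
  induction n with
  | zero => intro t ht hη; simp
  | succ n ih =>
    intro t ht hη
    have h2n : (0:ℝ) < 2^n := by positivity
    have hmem : t / 2^(n+1) ∈ Set.Ioc (0:ℝ) η₀ := by
      constructor
      · positivity
      · have : t / 2^(n+1) ≤ t := by
          rw [div_le_iff₀ (by positivity)]
          nlinarith [one_le_pow₀ (a := (2:ℝ)) (n := n+1) one_le_two]
        linarith
    have hd1 := hd _ hmem
    have heq : 2 * (t / 2^(n+1)) = t / 2^n := by
      rw [pow_succ]; field_simp
    rw [heq] at hd1
    have ih1 := ih t ht hη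
    have : (c/2)^(n+1) * om t = (c/2) * ((c/2)^n * om t) := by ring
    rw [this]
    calc (c/2) * ((c/2)^n * om t) ≤ (c/2) * om (t / 2^n) := by
          apply mul_le_mul_of_nonneg_left ih1 (by positivity)
      _ ≤ om (t / 2^(n+1)) := by linarith

def thetaOmega (om : ℝ → ℝ) (ε : ℝ) : ℝ :=
  sSup ((fun r => om r - r / ε) '' Set.Ici 0)

set_option maxHeartbeats 1000000 in
theorem integral_lower_bound (om : ℝ → ℝ) (hom : IsModulus om)
    (hpos : ∀ r > (0:ℝ), 0 < om r)
    (hliminf :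
      1 < Filter.liminf (fun η : ℝ => 2 * om η / om (2 * η)) (nhdsWithin 0 (Set.Ioi 0))) :
    ∃ K > (0:ℝ), ∃ ε₀ > (0:ℝ), ∀ ε : ℝ, 0 < ε → ε ≤ ε₀ →
      K⁻¹ * ε * thetaOmega om ε ^ 2 ≤
        ∫ r in Set.Ioc 0 (ε * thetaOmega om ε), max (om r - 2 * r / ε) 0 := by
  obtain ⟨hcont, hmono, hsub, h0, hnn⟩ := id hom
  set L := Filter.liminf (fun η : ℝ => 2 * om η / om (2 * η)) (nhdsWithin 0 (Set.Ioi 0)) with hL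
  -- extract doubling constant c ∈ (1, 2) and scale η₀ ∈ (0, 1]
  have hbdd : Filter.IsBoundedUnder (· ≥ ·) (nhdsWithin (0:ℝ) (Set.Ioi 0))
      (fun η : ℝ => 2 * om η / om (2 * η)) := by
    refine ⟨0, ?_⟩
    rw [Filter.eventually_map]
    refine eventually_nhdsWithin_of_forall (fun η hη => ?_)
    have hη' : (0:ℝ) < η := hη
    exact div_nonneg (by linarith [hnn η (Set.mem_Ici.mpr hη'.le)]) (hnn _ (Set.mem_Ici.mpr (by positivity)))
  set c : ℝ := min ((1 + L)/2) (3/2) with hcdef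
  have hc1 : 1 < c := lt_min (by linarith) (by norm_num)
  have hc2 : c ≤ 3/2 := min_le_right _ _
  have hcL : c < L := lt_of_le_of_lt (min_le_left _ _) (by linarith)
  have hev : ∀ᶠ η in nhdsWithin (0:ℝ) (Set.Ioi 0),
      c < 2 * om η / om (2 * η) := Filter.eventually_lt_of_lt_liminf hcL hbdd
  obtain ⟨η₁, hη₁pos, hη₁sub⟩ := mem_nhdsGT_iff_exists_Ioc_subset.mp hev
  set η₀ : ℝ := min η₁ 1 with hη₀def
  have hη₀pos : 0 < η₀ := lt_min hη₁pos one_pos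
  have hη₀le1 : η₀ ≤ 1 := min_le_right _ _
  have hd : ∀ η ∈ Set.Ioc (0:ℝ) η₀, c * om (2 * η) ≤ 2 * om η := by
    intro η hη
    have h1 : η ∈ Set.Ioc (0:ℝ) η₁ := ⟨hη.1, le_trans hη.2 (min_le_left _ _)⟩
    have h2 := hη₁sub h1
    simp only [Set.mem_setOf_eq] at h2
    have h3 : 0 < om (2 * η) := hpos _ (by linarith [hη.1])
    rw [lt_div_iff₀ h3] at h2
    linarith
  have hω1 : 0 < om 1 := hpos 1 one_pos
  set ω1 := om 1 with hω1def
  -- choose k with 8(2-c)/(c-1) < c^k, set κ := (c/2)^k, K := 16/κ²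
  obtain ⟨k, hk⟩ := pow_unbounded_of_one_lt (8*(2-c)/(c-1)) hc1
  set κ : ℝ := (c/2)^k with hκdef
  have hκpos : 0 < κ := by positivity
  have hκ1 : κ ≤ 1 := pow_le_one₀ (by positivity) (by linarith)
  have h8 : 8*(2-c) < c^k * (c-1) := by
    rw [div_lt_iff₀ (by linarith)] at hk
    linarith
  refine ⟨16/κ^2, by positivity, min ((2*ω1+1)⁻¹) (η₀/(2*ω1)), lt_min (by positivity) (by positivity), ?_⟩
  intro ε hε hεle
  have hεa : ε * (2*ω1+1) ≤ 1 := by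
    have h1 : ε ≤ (2*ω1+1)⁻¹ := le_trans hεle (min_le_left _ _)
    calc ε * (2*ω1+1) ≤ (2*ω1+1)⁻¹ * (2*ω1+1) :=
          mul_le_mul_of_nonneg_right h1 (by positivity)
      _ = 1 := inv_mul_cancel₀ (by positivity)
  have hεb : ε * (2*ω1) ≤ η₀ := by
    have h1 : ε ≤ η₀/(2*ω1) := le_trans hεle (min_le_right _ _)
    rw [le_div_iff₀ (by positivity)] at h1
    linarith
  have hω1inv : ω1 ≤ 1/ε := by
    rw [le_div_iff₀ hε]
    linarith [mul_nonneg hω1.le hε.le]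
  -- upper bound for f r = om r - r/ε
  have hub : ∀ r, 0 ≤ r → om r - r/ε ≤ ω1 := by
    intro r hr
    have h1 := mod_linear om hom r hr
    have h2 : r * ω1 ≤ r * (1/ε) := mul_le_mul_of_nonneg_left hω1inv hr
    have h3 : r * (1/ε) = r/ε := by ring
    linarith
  -- negativity for r ≥ 1
  have hneg : ∀ r, 1 ≤ r → om r - r/ε < 0 := by
    intro r hr
    have h1 := mod_linear om hom r (by linarith)
    rw [sub_neg, lt_div_iff₀ hε]
    have hA := mul_le_mul_of_nonneg_right h1 hε.le
    have hB := mul_le_mul_of_nonneg_right (show r+1 ≤ 2*r by linarith)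
      (mul_nonneg hω1.le hε.le)
    have hC : 2*(ω1*ε) ≤ 1-ε := by linarith
    have hD := mul_le_mul_of_nonneg_left hC (show (0:ℝ) ≤ r by linarith)
    have hE := mul_pos (show (0:ℝ) < r by linarith) hε
    nlinarith [hA, hB, hD, hE]
  -- positivity point rp
  have hωη₀ : 0 < om η₀ := hpos _ hη₀pos
  obtain ⟨n, hn⟩ := pow_unbounded_of_one_lt (η₀/(ε * om η₀)) hc1
  have h2n : (0:ℝ) < 2^n := by positivity
  have hrppos : 0 < η₀/2^n := by positivity
  have hrple : η₀/2^n ≤ η₀ := by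
    rw [div_le_iff₀ h2n]
    nlinarith [one_le_pow₀ (a := (2:ℝ)) (n := n) one_le_two]
  have hrple1 : η₀/2^n ≤ 1 := le_trans hrple hη₀le1
  have hfrp : 0 < om (η₀/2^n) - (η₀/2^n)/ε := by
    have hA := mod_doubling_iter om c η₀ (by linarith) hd n η₀ hη₀pos le_rfl
    rw [div_lt_iff₀ (by positivity)] at hn
    have hB : (η₀/2^n)/ε < (c/2)^n * om η₀ := by
      rw [div_pow, div_div, div_lt_iff₀ (by positivity)]
      calc η₀ < c^n * (ε * om η₀) := hn
        _ = c^n/2^n * om η₀ * (2^n * ε) := by field_simp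
    linarith
  -- maximizer on [0,1]
  have hfc : ContinuousOn (fun r => om r - r/ε) (Set.Icc 0 1) := by
    refine ContinuousOn.sub (hcont.mono (fun x hx => hx.1)) ?_
    exact (continuous_id.div_const ε).continuousOn
  obtain ⟨rs, hrsmem, hrsmax⟩ := isCompact_Icc.exists_isMaxOn
    (⟨0, by norm_num⟩ : (Set.Icc (0:ℝ) 1).Nonempty) hfc
  have hmax : ∀ x ∈ Set.Icc (0:ℝ) 1, om x - x/ε ≤ om rs - rs/ε := fun x hx => hrsmax hx
  have hrs0 : 0 ≤ rs := hrsmem.1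
  have hfrs : 0 < om rs - rs/ε :=
    lt_of_lt_of_le hfrp (hmax _ ⟨hrppos.le, hrple1⟩)
  have hglobal : ∀ r, 0 ≤ r → om r - r/ε ≤ om rs - rs/ε := by
    intro r hr
    by_cases h : r ≤ 1
    · exact hmax r ⟨hr, h⟩
    · have := hneg r (by linarith)
      linarith
  set θ := thetaOmega om ε with hθdef
  have hθ : θ = om rs - rs/ε := by
    rw [hθdef]
    unfold thetaOmega
    apply le_antisymm
    · refine csSup_le ⟨om 0 - 0/ε, ⟨0, Set.mem_Ici.mpr le_rfl, rfl⟩⟩ ?_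
      rintro x ⟨r, hr, rfl⟩
      exact hglobal r hr
    · refine le_csSup ⟨ω1, ?_⟩ ⟨rs, Set.mem_Ici.mpr hrs0, rfl⟩
      rintro x ⟨r, hr, rfl⟩
      exact hub r hr
  have hθpos : 0 < θ := hθ ▸ hfrs
  have hrspos : 0 < rs := by
    rcases eq_or_lt_of_le hrs0 with h|h
    · exfalso
      rw [← h] at hfrs
      simp [h0] at hfrs
    · exact h
  -- rs is small
  have hrsη₀ : rs ≤ η₀ := by
    have h1 : rs < om rs * ε := by
      have := hfrs
      rw [sub_pos, div_lt_iff₀ hε] at this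
      linarith
    have h2 := mod_linear om hom rs hrs0
    have h3 : rs ≤ 1 := hrsmem.2
    have hA := mul_le_mul_of_nonneg_right h2 hε.le
    have hB := mul_le_mul_of_nonneg_right (show rs+1 ≤ 2 by linarith)
      (mul_nonneg hω1.le hε.le)
    nlinarith [hA, hB, hεb]
  -- key inequality: (c-1) rs ≤ (2-c) ε θ
  have hfeq : om rs = θ + rs/ε := by rw [hθ]; ring
  have hfeq' : ε * om rs = ε*θ + rs := by
    rw [hfeq]
    field_simp
  have hsup2 : om (rs/2) - (rs/2)/ε ≤ θ := hθ ▸ hglobal (rs/2) (by positivity)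
  have hsup2' : ε * om (rs/2) ≤ ε*θ + rs/2 := by
    have h1 := mul_le_mul_of_nonneg_left hsup2 hε.le
    have h2 : ε * (om (rs/2) - rs/2/ε) = ε * om (rs/2) - rs/2 := by
      field_simp
    rw [h2] at h1
    linarith
  have hhalf : c * om rs ≤ 2 * om (rs/2) := by
    have h1 := hd (rs/2) ⟨by positivity, by linarith⟩
    rw [show 2*(rs/2) = rs by ring] at h1
    exact h1
  have hhalf' : c * (ε*θ + rs) ≤ 2*(ε*θ) + rs := by
    have h1 : ε * (c * om rs) ≤ ε * (2 * om (rs/2)) :=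
      mul_le_mul_of_nonneg_left hhalf hε.le
    have e1 : c * (ε * om rs) = c * (ε*θ + rs) := by rw [hfeq']
    nlinarith [h1, e1, hsup2']
  have hkey : (c-1)*rs ≤ (2-c)*(ε*θ) := by nlinarith [hhalf']
  -- 8 rs ≤ c^k ε θ, hence s := rs/2^k ≤ κ ε θ / 8
  have hsθ : 8 * rs ≤ c^k * (ε*θ) := by
    have hεθ : 0 ≤ ε*θ := by positivity
    have hA := mul_le_mul_of_nonneg_right h8.le hεθ
    have h1 : (c-1) * (8*rs) ≤ (c-1) * (c^k*(ε*θ)) := by nlinarith [hkey, hA]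
    exact le_of_mul_le_mul_left h1 (by linarith)
  set s := rs/2^k with hsdef
  have h2k : (0:ℝ) < 2^k := by positivity
  have hspos : 0 < s := by positivity
  have hωs : κ*θ ≤ om s := by
    have h1 := mod_doubling_iter om c η₀ (by linarith) hd k rs hrspos hrsη₀
    have h2 : θ ≤ om rs := by
      rw [hfeq]
      have : 0 ≤ rs/ε := by positivity
      linarith
    calc κ*θ ≤ κ * om rs := mul_le_mul_of_nonneg_left h2 hκpos.le
      _ ≤ om s := h1
  have hsle : s ≤ κ*(ε*θ)/8 := by
    have h1 : rs ≤ c^k*(ε*θ)/8 := by linarith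
    calc s = rs/2^k := hsdef
      _ ≤ (c^k*(ε*θ)/8)/2^k := by gcongr
      _ = κ*(ε*θ)/8 := by rw [hκdef, div_pow]; ring
  set b := κ*(ε*θ)/4 with hbdef
  have hεθpos : 0 < ε*θ := by positivity
  have hbM : b ≤ ε*θ := by
    have := mul_le_mul_of_nonneg_right hκ1 hεθpos.le
    linarith
  have hsb : s < b := by
    have : 0 < κ*(ε*θ)/8 := by positivity
    calc s ≤ κ*(ε*θ)/8 := hsle
      _ < κ*(ε*θ)/4 := by linarith
  have hsubset : Set.Ioc s b ⊆ Set.Ioc 0 (ε*θ) := Set.Ioc_subset_Ioc hspos.le hbM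
  have hpoint : ∀ r ∈ Set.Ioc s b, κ*θ/2 ≤ max (om r - 2*r/ε) 0 := by
    intro r hr
    have hr0 : 0 < r := lt_trans hspos hr.1
    have h1 : om s ≤ om r := hmono (Set.mem_Ici.mpr hspos.le) (Set.mem_Ici.mpr hr0.le) hr.1.le
    have h2 : 2*r/ε ≤ κ*θ/2 := by
      rw [div_le_iff₀ hε]
      have hrb : r ≤ b := hr.2
      rw [hbdef] at hrb
      linarith
    refine le_trans ?_ (le_max_left _ _)
    linarith
  -- integral estimates
  have hgc : ContinuousOn (fun r => max (om r - 2*r/ε) 0) (Set.Icc 0 (ε*θ)) := by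
    refine ContinuousOn.sup ?_ continuousOn_const
    refine ContinuousOn.sub (hcont.mono (fun x hx => hx.1)) ?_
    exact ((continuous_const.mul continuous_id).div_const ε).continuousOn
  have hgint : IntegrableOn (fun r => max (om r - 2*r/ε) 0) (Set.Ioc 0 (ε*θ)) :=
    hgc.integrableOn_Icc.mono_set Set.Ioc_subset_Icc_self
  have hgint2 : IntegrableOn (fun r => max (om r - 2*r/ε) 0) (Set.Ioc s b) :=
    hgint.mono_set hsubset
  have step1 : ∫ r in Set.Ioc s b, max (om r - 2*r/ε) 0 ≤
      ∫ r in Set.Ioc 0 (ε*θ), max (om r - 2*r/ε) 0 :=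
    setIntegral_mono_set hgint
      (Filter.Eventually.of_forall (fun r => le_max_right _ _))
      (HasSubset.Subset.eventuallyLE hsubset)
  have step2 : ∫ _r in Set.Ioc s b, (κ*θ/2) ≤
      ∫ r in Set.Ioc s b, max (om r - 2*r/ε) 0 :=
    setIntegral_mono_on (integrableOn_const measure_Ioc_lt_top.ne)
      hgint2 measurableSet_Ioc hpoint
  have step3 : ∫ _r in Set.Ioc s b, (κ*θ/2) = (b - s) * (κ*θ/2) := by
    rw [setIntegral_const, Real.volume_real_Ioc_of_le (by linarith), smul_eq_mul]
  have hlen : κ*(ε*θ)/8 ≤ b - s := by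
    rw [hbdef]; linarith
  calc (16/κ^2)⁻¹ * ε * θ^2 = (κ*(ε*θ)/8) * (κ*θ/2) := by
        rw [inv_div]
        ring
    _ ≤ (b - s) * (κ*θ/2) := by
        apply mul_le_mul_of_nonneg_right hlen
        positivity
    _ = ∫ _r in Set.Ioc s b, (κ*θ/2) := step3.symm
    _ ≤ ∫ r in Set.Ioc s b, max (om r - 2*r/ε) 0 := step2
    _ ≤ ∫ r in Set.Ioc 0 (ε*θ), max (om r - 2*r/ε) 0 := step1
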